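/- Algorithmic soundness (success case): if the matching state machine, started in the running state with the empty substitution, empty backtracking stack, and continuation [match p against t], reaches the state success(θ) after one or more steps, then p matches t under θ in the declarative semantics. -/

import Mathlib

namespace PyPM
/-- Terms over a signature of function symbols (names with lists of arguments). -/
inductive Tm where
  | app : String → List Tm → Tm


/-- Basic patterns: variables, function applications, and alternates. -/
inductive Pat where
  | var : String → Pat
  | app : String → List Pat → Pat
  | alt : Pat → Pat → Pat

/-- Substitutions: finite maps from variables to terms (modeled as partial functions). -/
abbrev Subst := String → Option Tm

def emptySubst : Subst := fun _ => none

def Subst.update (θ : Subst) (x : String) (t : Tm) : Subst :=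
  fun y => if y = x then some t else θ y

/-- θ ⊆ θ' : every binding of θ is a binding of θ'. -/
def Subst.le (θ θ' : Subst) : Prop := ∀ x t, θ x = some t → θ' x = some t

/-- Declarative matching semantics: θ ⊢ p ≈ t. -/
inductive Matches : Subst → Pat → Tm → Prop where
  | var {θ : Subst} {x : String} {t : Tm} :
      θ x = some t → Matches θ (.var x) t
  | app {θ : Subst} {f : String} {ps : List Pat} {ts : List Tm}
      (hlen : ps.length = ts.length)
      (hargs : ∀ i (h1 : i < ps.length) (h2 : i < ts.length), Matches θ ps[i] ts[i]) :
      Matches θ (.app f ps) (.app f ts)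
  | alt1 {θ : Subst} {p p' : Pat} {t : Tm} :
      Matches θ p t → Matches θ (.alt p p') t
  | alt2 {θ : Subst} {p p' : Pat} {t : Tm} :
      Matches θ p' t → Matches θ (.alt p p') t

/-- Actions in the machine continuation. -/
inductive Action where
  | doMatch : Pat → Tm → Action

abbrev Cont := List Action
abbrev Frame := Subst × Cont
abbrev Stack := List Frame

/-- Machine states. -/
inductive St where
  | success : Subst → St
  | failure : St
  | running : Subst → Stack → Cont → St

/-- Backtracking: pop the stack, or fail if it is empty. -/
def backtrack : Stack → St
  | [] => .failure
  | (θ, k) :: stk => .running θ stk k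

/-- The step relation of the algorithmic matching machine. -/
inductive Step : St → St → Prop where
  | success {θ stk} :
      Step (.running θ stk []) (.success θ)
  | varBind {θ : Subst} {stk x t k} :
      θ x = none →
      Step (.running θ stk (.doMatch (.var x) t :: k)) (.running (θ.update x t) stk k)
  | varBound {θ : Subst} {stk x t k} :
      θ x = some t →
      Step (.running θ stk (.doMatch (.var x) t :: k)) (.running θ stk k)
  | varConflict {θ : Subst} {stk x t t' k} :
      θ x = some t' → t' ≠ t →
      Step (.running θ stk (.doMatch (.var x) t :: k)) (backtrack stk)
  | fn {θ stk f ps ts k} :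
      ps.length = ts.length →
      Step (.running θ stk (.doMatch (.app f ps) (.app f ts) :: k))
           (.running θ stk (((ps.zip ts).map fun pt => .doMatch pt.1 pt.2) ++ k))
  | fnConflict {θ stk f g ps ts k} :
      f ≠ g ∨ ps.length ≠ ts.length →
      Step (.running θ stk (.doMatch (.app f ps) (.app g ts) :: k)) (backtrack stk)
  | alt {θ stk p p' t k} :
      Step (.running θ stk (.doMatch (.alt p p') t :: k))
           (.running θ ((θ, .doMatch p' t :: k) :: stk) (.doMatch p t :: k))

end PyPM

open PyPM

def ActOK (θ : Subst) : Action → Prop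
  | .doMatch p t => Matches θ p t

def GoodFrame (θ : Subst) (fr : Frame) : Prop :=
  fr.1.le θ ∧ ∀ a ∈ fr.2, ActOK θ a

def Good (θ : Subst) : St → Prop
  | .success θ' => θ' = θ
  | .failure => False
  | .running θ₀ stk k => GoodFrame θ (θ₀, k) ∨ ∃ fr ∈ stk, GoodFrame θ fr

theorem step_good {θ : Subst} {s s' : St} (hs : Step s s') (hg : Good θ s') :
    Good θ s := by
  cases hs with
  | success =>
      cases hg
      exact Or.inl ⟨fun x t h => h, by simp⟩
  | @varBind θ₀ stk x t k hx =>
      rcases hg with ⟨hle, hk⟩ | ⟨fr, hmem, hfr⟩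
      · refine Or.inl ⟨?_, ?_⟩
        · intro y u hy
          apply hle
          simp only [Subst.update]
          by_cases hyx : y = x
          · subst hyx
            have hy' : θ₀ y = some u := hy
            rw [hx] at hy'; exact absurd hy' (by simp)
          · simpa [hyx] using hy
        · intro a ha
          rcases List.mem_cons.1 ha with rfl | ha
          · exact Matches.var (hle x t (by simp [Subst.update]))
          · exact hk a ha
      · exact Or.inr ⟨fr, hmem, hfr⟩
  | @varBound θ₀ stk x t k hx =>
      rcases hg with ⟨hle, hk⟩ | ⟨fr, hmem, hfr⟩
      · refine Or.inl ⟨hle, ?_⟩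
        intro a ha
        rcases List.mem_cons.1 ha with rfl | ha
        · exact Matches.var (hle x t hx)
        · exact hk a ha
      · exact Or.inr ⟨fr, hmem, hfr⟩
  | @varConflict θ₀ stk x t t' k _ _ =>
      cases stk with
      | nil => exact absurd hg (by simp [backtrack, Good])
      | cons fr rest =>
          obtain ⟨θ₁, k₁⟩ := fr
          rcases hg with h | ⟨fr', hmem, hfr⟩
          · exact Or.inr ⟨(θ₁, k₁), by simp, h⟩
          · exact Or.inr ⟨fr', by simp [hmem], hfr⟩
  | @fn θ₀ stk f ps ts k hlen =>
      rcases hg with ⟨hle, hk⟩ | ⟨fr, hmem, hfr⟩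
      · refine Or.inl ⟨hle, ?_⟩
        intro a ha
        rcases List.mem_cons.1 ha with rfl | ha
        · refine Matches.app hlen ?_
          intro i h1 h2
          have hmem : Action.doMatch ps[i] ts[i] ∈
              ((ps.zip ts).map fun pt => Action.doMatch pt.1 pt.2) ++ k := by
            apply List.mem_append_left
            have hi : i < (ps.zip ts).length := by
              simp [List.length_zip]; omega
            have hz : (ps.zip ts)[i] = (ps[i], ts[i]) := List.getElem_zip
            have hm := List.getElem_mem (l := (ps.zip ts).map fun pt => Action.doMatch pt.1 pt.2)
              (n := i) (by simpa using hi)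
            simpa [List.getElem_map, hz] using hm
          exact hk _ hmem
        · exact hk a (List.mem_append_right _ ha)
      · exact Or.inr ⟨fr, hmem, hfr⟩
  | @fnConflict θ₀ stk f g ps ts k _ =>
      cases stk with
      | nil => exact absurd hg (by simp [backtrack, Good])
      | cons fr rest =>
          obtain ⟨θ₁, k₁⟩ := fr
          rcases hg with h | ⟨fr', hmem, hfr⟩
          · exact Or.inr ⟨(θ₁, k₁), by simp, h⟩
          · exact Or.inr ⟨fr', by simp [hmem], hfr⟩
  | @alt θ₀ stk p p' t k =>
      rcases hg with ⟨hle, hk⟩ | ⟨fr, hmem, hfr⟩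
      · refine Or.inl ⟨hle, ?_⟩
        intro a ha
        rcases List.mem_cons.1 ha with rfl | ha
        · have hm : ActOK θ (Action.doMatch p t) := hk (Action.doMatch p t) (by simp)
          exact Matches.alt1 hm
        · exact hk a (by simp [ha])
      · rcases List.mem_cons.1 hmem with rfl | hmem
        · refine Or.inl ⟨hfr.1, ?_⟩
          intro a ha
          rcases List.mem_cons.1 ha with rfl | ha
          · have hm : ActOK θ (Action.doMatch p' t) := hfr.2 (Action.doMatch p' t) (by simp)
            exact Matches.alt2 hm
          · exact hfr.2 a (by simp [ha])
        · exact Or.inr ⟨fr, hmem, hfr⟩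

theorem reach_good {θ : Subst} {s : St}
    (h : Relation.TransGen Step s (.success θ)) : Good θ s := by
  induction h using Relation.TransGen.head_induction_on with
  | single hs => exact step_good hs rfl
  | head hs _ ih => exact step_good hs ih

/-- Algorithmic soundness (success case). -/
theorem alg_soundness_success {p : Pat} {t : Tm} {θ : Subst}
    (h : Relation.TransGen Step (.running emptySubst [] [.doMatch p t]) (.success θ)) :
    Matches θ p t := by
  rcases reach_good h with ⟨_, hk⟩ | ⟨fr, hmem, _⟩
  · have hm : ActOK θ (Action.doMatch p t) := hk (Action.doMatch p t) (by simp)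
    exact hm
  · simp at hmem
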